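/- Suppose X is a metric space and f : X → ℝⁿ is a regular map with multiplicity constant N ∈ ℕ. Assume there is an open ball B ⊆ ℝⁿ and a set U ⊆ f⁻¹(B) such that g := f|_U : U → B is a homeomorphism of U onto B. Then g is bi-Lipschitz; in fact, if f is L-Lipschitz, then d_X(x,y) ≤ 4N·|f(x) − f(y)| and |f(x) − f(y)| ≤ L·d_X(x,y) for all x, y ∈ U. -/

import Mathlib

open Metric Set MeasureTheory Filter Topology

noncomputable section

/-- Cross-ratio of a four-tuple of points in a metric space. -/
def crossRatio {Z : Type*} [MetricSpace Z] (z₁ z₂ z₃ z₄ : Z) : NNReal :=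
  nndist z₁ z₃ * nndist z₂ z₄ / (nndist z₁ z₄ * nndist z₂ z₃)

/-- `f : X → Y` is `η`-quasi-Möbius. -/
def IsQuasiMobius {X Y : Type*} [MetricSpace X] [MetricSpace Y]
    (η : NNReal ≃ₜ NNReal) (f : X → Y) : Prop :=
  Function.Injective f ∧
  ∀ x₁ x₂ x₃ x₄ : X, x₁ ≠ x₂ → x₁ ≠ x₃ → x₁ ≠ x₄ → x₂ ≠ x₃ → x₂ ≠ x₄ → x₃ ≠ x₄ →
    crossRatio (f x₁) (f x₂) (f x₃) (f x₄) ≤ η (crossRatio x₁ x₂ x₃ x₄)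

/-- `f : X → Y` is `η`-quasi-symmetric. -/
def IsQuasiSymmetric {X Y : Type*} [MetricSpace X] [MetricSpace Y]
    (η : NNReal ≃ₜ NNReal) (f : X → Y) : Prop :=
  Function.Injective f ∧
  ∀ x₁ x₂ x₃ : X, x₁ ≠ x₂ → x₁ ≠ x₃ → x₂ ≠ x₃ →
    nndist (f x₁) (f x₂) / nndist (f x₁) (f x₃) ≤ η (nndist x₁ x₂ / nndist x₁ x₃)

/-- Lebesgue covering dimension is at most `n`. -/
def covDimLE (X : Type*) [TopologicalSpace X] (n : ℕ) : Prop :=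
  ∀ 𝒰 : Set (Set X), (∀ U ∈ 𝒰, IsOpen U) → ⋃₀ 𝒰 = univ →
    ∃ 𝒱 : Set (Set X), (∀ V ∈ 𝒱, IsOpen V) ∧ ⋃₀ 𝒱 = univ ∧
      (∀ V ∈ 𝒱, ∃ U ∈ 𝒰, V ⊆ U) ∧
      ∀ x : X, {V ∈ 𝒱 | x ∈ V}.encard ≤ (n + 1 : ℕ)

/-- Lebesgue covering (topological) dimension. -/
noncomputable def topDim (X : Type*) [TopologicalSpace X] : ℕ∞ :=
  ⨅ (n : ℕ) (_ : covDimLE X n), (n : ℕ∞)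

/-- Ahlfors `Q`-regularity. -/
def AhlforsRegular (Q : ℝ) (Z : Type*) [MetricSpace Z] [MeasurableSpace Z] [BorelSpace Z] :
    Prop :=
  0 < Q ∧ CompleteSpace Z ∧ 0 < Metric.diam (univ : Set Z) ∧
  ∃ C : ℝ, 1 ≤ C ∧ ∀ (z : Z) (R : ℝ), 0 < R → R ≤ Metric.diam (univ : Set Z) →
    ENNReal.ofReal (R ^ Q / C) ≤ μH[Q] (Metric.ball z R) ∧
    μH[Q] (Metric.ball z R) ≤ ENNReal.ofReal (C * R ^ Q)

/-- The action of `G` on `Z` is by homeomorphisms, each `η`-quasi-Möbius. -/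
def QMAction (η : NNReal ≃ₜ NNReal) (G Z : Type*) [Group G] [MulAction G Z]
    [MetricSpace Z] : Prop :=
  (∀ g : G, Continuous fun z : Z => g • z) ∧
  ∀ g : G, IsQuasiMobius η (fun z : Z => g • z)

/-- Cocompactness of the induced action on distinct triples (for compact `Z`). -/
def TriplesCocompact (G Z : Type*) [Group G] [MulAction G Z] [MetricSpace Z] : Prop :=
  ∃ δ > (0:ℝ), ∀ z₁ z₂ z₃ : Z, z₁ ≠ z₂ → z₁ ≠ z₃ → z₂ ≠ z₃ →
    ∃ g : G, δ ≤ dist (g • z₁) (g • z₂) ∧ δ ≤ dist (g • z₁) (g • z₃) ∧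
      δ ≤ dist (g • z₂) (g • z₃)

def IsStableValue {X Y : Type*} [TopologicalSpace X] [MetricSpace Y]
    (f : X → Y) (y : Y) : Prop :=
  ∃ ε > (0:ℝ), ∀ g : X → Y, Continuous g → (∀ x, dist (f x) (g x) < ε) → y ∈ range g

def IsStableValueOn {X Y : Type*} [TopologicalSpace X] [MetricSpace Y]
    (f : X → Y) (s : Set X) (y : Y) : Prop :=
  IsStableValue (fun x : s => f x) y

def IsStablePoint {X Y : Type*} [TopologicalSpace X] [MetricSpace Y]
    (f : X → Y) (x : X) : Prop :=
  ∀ U ∈ nhds x, IsStableValueOn f U (f x)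

/-- `f` is a regular map. -/
def IsRegularMap {X Y : Type*} [MetricSpace X] [MetricSpace Y] (f : X → Y) : Prop :=
  (∃ L : NNReal, LipschitzWith L f) ∧
  ∃ N : ℕ, ∀ (y : Y) (r : ℝ), 0 < r → ∃ t : Finset X, t.card ≤ N ∧
    f ⁻¹' Metric.ball y r ⊆ ⋃ c ∈ t, Metric.ball c r

/-- A metric space is doubling. -/
def MetricDoubling (Y : Type*) [MetricSpace Y] : Prop :=
  ∃ M : ℕ, ∀ (y : Y) (R : ℝ), ∃ t : Finset Y, t.card ≤ M ∧
    Metric.ball y R ⊆ ⋃ c ∈ t, Metric.ball c (R / 2)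

/-- A metric space is uniformly perfect. -/
def UniformlyPerfect (Z : Type*) [MetricSpace Z] : Prop :=
  ∃ lam : ℝ, 1 ≤ lam ∧ ∀ (z : Z) (R : ℝ), 0 < R → R ≤ Metric.diam (univ : Set Z) →
    (Metric.closedBall z R \ Metric.ball z (R / lam)).Nonempty

/-- `(S, q)` is a weak tangent of `Z`: `S` is complete and some rescalings
`(λ_k Z, p_k)` converge to `(S, q)` in the pointed Gromov–Hausdorff sense. -/
def PointedWeakTangent (Z : Type*) [MetricSpace Z] (S : Type*) [MetricSpace S]
    (q : S) : Prop :=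
  CompleteSpace S ∧
  ∃ (lam : ℕ → ℝ) (p : ℕ → Z), (∀ k, 0 < lam k) ∧ Tendsto lam atTop atTop ∧
    ∀ R > (0:ℝ), ∀ ε > (0:ℝ), ∃ (N : ℕ) (M : Set S),
      q ∈ M ∧ M ⊆ Metric.ball q R ∧ (∀ s ∈ Metric.ball q R, ∃ m ∈ M, dist s m ≤ ε) ∧
      ∀ k ≥ N, ∃ (Mk : Set Z) (F : Z → S),
        p k ∈ Mk ∧ (∀ z ∈ Mk, lam k * dist z (p k) < R) ∧
        (∀ z : Z, lam k * dist z (p k) < R → ∃ w ∈ Mk, lam k * dist z w ≤ ε) ∧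
        F (p k) = q ∧ Set.BijOn F Mk M ∧
        ∀ a ∈ Mk, ∀ b ∈ Mk, |lam k * dist a b - dist (F a) (F b)| < ε

section AuxBK
open SimpleGraph

lemma walk_dist_le' {V : Type*} [MetricSpace V] {ρ : ℝ}
    {G : SimpleGraph V} (hG : ∀ u v : V, G.Adj u v → dist u v ≤ 2 * ρ) :
    ∀ {u v : V} (w : G.Walk u v), dist u v ≤ 2 * ρ * w.length := by
  intro u v w
  induction w with
  | nil => simp
  | @cons u v w h p ih =>
    have h1 := hG _ _ h
    have h2 := dist_triangle u v w
    simp only [SimpleGraph.Walk.length_cons]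
    push_cast
    nlinarith [dist_nonneg (x := u) (y := v)]

lemma connected_cover_dist {X : Type*} [MetricSpace X] {ρ : ℝ} (hρ : 0 < ρ)
    (t : Finset X) {S : Set X} (hS : IsPreconnected S)
    (hcov : S ⊆ ⋃ c ∈ t, Metric.ball c ρ)
    {x y : X} (hx : x ∈ S) (hy : y ∈ S) :
    dist x y ≤ 2 * ρ * t.card := by
  classical
  obtain ⟨c₀, hc₀t, hxc₀⟩ : ∃ c ∈ t, x ∈ Metric.ball c ρ := by
    simpa using hcov hx
  set G : SimpleGraph ↥t :=
    { Adj := fun a b => a ≠ b ∧ (Metric.ball a.1 ρ ∩ Metric.ball b.1 ρ).Nonempty,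
      symm := by
        refine ⟨?_⟩
        rintro a b ⟨h1, h2⟩
        exact ⟨h1.symm, by rwa [Set.inter_comm] at h2⟩,
      loopless := ⟨fun a h => h.1 rfl⟩ } with hGdef
  set c₀' : ↥t := ⟨c₀, hc₀t⟩ with hc₀'
  set u : Set X := ⋃ (d : ↥t) (_ : G.Reachable c₀' d), Metric.ball d.1 ρ with hu
  set v : Set X := ⋃ (d : ↥t) (_ : ¬ G.Reachable c₀' d), Metric.ball d.1 ρ with hv
  have huo : IsOpen u := isOpen_iUnion fun d => isOpen_iUnion fun _ => isOpen_ball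
  have hvo : IsOpen v := isOpen_iUnion fun d => isOpen_iUnion fun _ => isOpen_ball
  have hcover : S ⊆ u ∪ v := by
    intro z hz
    obtain ⟨d, hdt, hzd⟩ : ∃ d ∈ t, z ∈ Metric.ball d ρ := by simpa using hcov hz
    by_cases hre : G.Reachable c₀' ⟨d, hdt⟩
    · exact Or.inl (Set.mem_iUnion.2 ⟨⟨d, hdt⟩, Set.mem_iUnion.2 ⟨hre, hzd⟩⟩)
    · exact Or.inr (Set.mem_iUnion.2 ⟨⟨d, hdt⟩, Set.mem_iUnion.2 ⟨hre, hzd⟩⟩)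
  have hxu : x ∈ u := Set.mem_iUnion.2 ⟨c₀', Set.mem_iUnion.2 ⟨Reachable.refl _, hxc₀⟩⟩
  have hSv : ¬ (S ∩ v).Nonempty := by
    intro hne
    obtain ⟨z, hzS, hzuv⟩ := hS u v huo hvo hcover ⟨x, hx, hxu⟩ hne
    obtain ⟨d, hd⟩ := Set.mem_iUnion.1 hzuv.1
    obtain ⟨hre, hzd⟩ := Set.mem_iUnion.1 hd
    obtain ⟨d', hd'⟩ := Set.mem_iUnion.1 hzuv.2
    obtain ⟨hnre, hzd'⟩ := Set.mem_iUnion.1 hd'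
    have hdd : d ≠ d' := by rintro rfl; exact hnre hre
    exact hnre (hre.trans (SimpleGraph.Adj.reachable ⟨hdd, ⟨z, hzd, hzd'⟩⟩))
  obtain ⟨c₁, hre₁, hyc₁⟩ : ∃ d : ↥t, G.Reachable c₀' d ∧ y ∈ Metric.ball d.1 ρ := by
    rcases hcover hy with h | h
    · obtain ⟨d, hd⟩ := Set.mem_iUnion.1 h
      obtain ⟨hre, hyd⟩ := Set.mem_iUnion.1 hd
      exact ⟨d, hre, hyd⟩
    · exact absurd ⟨y, hy, h⟩ hSv
  have hadj : ∀ a b : ↥t, G.Adj a b → dist a b ≤ 2 * ρ := by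
    rintro a b ⟨-, z, hza, hzb⟩
    have := dist_triangle (a : X) z (b : X)
    rw [Metric.mem_ball] at hza hzb
    rw [dist_comm (a:X) z] at this
    calc dist a b = dist (a : X) (b : X) := rfl
      _ ≤ _ := by linarith
  obtain ⟨w⟩ := hre₁
  have hlen : (w.toPath : G.Walk c₀' c₁).length < t.card := by
    have := w.toPath.2.length_lt
    simpa [Fintype.card_coe] using this
  have hd01 : dist (c₀ : X) ((c₁ : ↥t) : X) ≤ 2 * ρ * (w.toPath : G.Walk c₀' c₁).length := by
    have := walk_dist_le' hadj (w.toPath : G.Walk c₀' c₁)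
    rwa [Subtype.dist_eq] at this
  rw [Metric.mem_ball] at hxc₀ hyc₁
  have hcard : ((w.toPath : G.Walk c₀' c₁).length : ℝ) + 1 ≤ (t.card : ℝ) := by
    exact_mod_cast hlen
  have h3 := dist_triangle x (c₀ : X) y
  have h4 := dist_triangle (c₀ : X) (c₁ : X) y
  rw [dist_comm y (c₁ : X)] at hyc₁
  nlinarith [dist_nonneg (x := (c₀:X)) (y := (c₁:X))]

end AuxBK

/-- **Bonk–Kleiner, Lemma 4.2.** If `f : X → ℝⁿ` is a regular map (Lipschitz with
constant `L`, and preimages of balls are covered by at most `N` balls of the same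
radius), `B ⊆ ℝⁿ` is an open ball and `U ⊆ f⁻¹(B)` is such that `f|_U : U → B` is a
homeomorphism, then `f|_U` is bi-Lipschitz: `d_X(x,y) ≤ 4N·|f(x) − f(y)|` and
`|f(x) − f(y)| ≤ L·d_X(x,y)` for `x, y ∈ U`. -/
theorem regular_homeo_onto_ball_is_biLipschitz {X : Type*} [MetricSpace X] (n : ℕ)
    (f : X → EuclideanSpace ℝ (Fin n))
    (L : NNReal) (hLip : LipschitzWith L f) (N : ℕ)
    (hreg : ∀ (y : EuclideanSpace ℝ (Fin n)) (r : ℝ), 0 < r →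
      ∃ t : Finset X, t.card ≤ N ∧
        f ⁻¹' Metric.ball y r ⊆ ⋃ c ∈ t, Metric.ball c r)
    (c : EuclideanSpace ℝ (Fin n)) (r : ℝ) (hr : 0 < r) (U : Set X)
    (hU : U ⊆ f ⁻¹' Metric.ball c r)
    (e : ↥U ≃ₜ ↥(Metric.ball c r))
    (he : ∀ x : ↥U, (e x : EuclideanSpace ℝ (Fin n)) = f ↑x) :
    ∀ x ∈ U, ∀ y ∈ U,
      dist x y ≤ 4 * N * dist (f x) (f y) ∧ dist (f x) (f y) ≤ L * dist x y := by
  intro x hx y hy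
  refine ⟨?_, hLip.dist_le_mul x y⟩
  set a := f x with ha
  set b := f y with hb
  set R := dist a b with hR
  rcases eq_or_lt_of_le (dist_nonneg (x := a) (y := b)) with hR0 | hR0
  · -- f x = f y, hence x = y by injectivity
    have hab : a = b := by rwa [eq_comm, dist_eq_zero] at hR0
    have hxy : x = y := by
      have h1 : e ⟨x, hx⟩ = e ⟨y, hy⟩ := by
        apply Subtype.ext
        rw [he ⟨x, hx⟩, he ⟨y, hy⟩]
        exact hab
      exact Subtype.ext_iff.1 (e.injective h1)
    simp [hxy, ← hR, ← hR0]
    positivity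
  -- main case: R > 0
  have hseg_ball : segment ℝ a b ⊆ Metric.ball c r :=
    (convex_ball c r).segment_subset (hU hx) (hU hy)
  have hseg_cb : segment ℝ a b ⊆ Metric.closedBall a R :=
    (convex_closedBall a R).segment_subset (by simp [hR])
      (by simp [mem_closedBall, dist_comm b a, hR])
  -- the connected set S
  set S : Set X := (fun p : ↥(Metric.ball c r) => (e.symm p : X)) ''
    (Subtype.val ⁻¹' segment ℝ a b) with hSdef
  have haball : a ∈ Metric.ball c r := hU hx
  have hbball : b ∈ Metric.ball c r := hU hy
  have hxS : x ∈ S := by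
    refine ⟨⟨a, haball⟩, by simpa using left_mem_segment ℝ a b, ?_⟩
    have h : e ⟨x, hx⟩ = ⟨a, haball⟩ := Subtype.ext (he ⟨x, hx⟩)
    simp only [← h, Homeomorph.symm_apply_apply]
  have hyS : y ∈ S := by
    refine ⟨⟨b, hbball⟩, by simpa using right_mem_segment ℝ a b, ?_⟩
    have h : e ⟨y, hy⟩ = ⟨b, hbball⟩ := Subtype.ext (he ⟨y, hy⟩)
    simp only [← h, Homeomorph.symm_apply_apply]
  have hpre : IsPreconnected
      ((Subtype.val : ↥(Metric.ball c r) → EuclideanSpace ℝ (Fin n)) ⁻¹' segment ℝ a b) := by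
    apply Topology.IsInducing.subtypeVal.isPreconnected_image.1
    have himg : (Subtype.val : ↥(Metric.ball c r) → EuclideanSpace ℝ (Fin n)) ''
        ((Subtype.val : ↥(Metric.ball c r) → EuclideanSpace ℝ (Fin n)) ⁻¹' segment ℝ a b)
        = segment ℝ a b := by
      ext z
      constructor
      · rintro ⟨p, hp, rfl⟩; exact hp
      · intro hz; exact ⟨⟨z, hseg_ball hz⟩, hz, rfl⟩
    rw [himg]
    exact (convex_segment a b).isPreconnected
  have hSconn : IsPreconnected S :=
    hpre.image _ (Continuous.continuousOn (by continuity))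
  have hfS : ∀ z ∈ S, f z ∈ Metric.closedBall a R := by
    rintro z ⟨p, hp, rfl⟩
    have : f ((e.symm p : X)) = (p : EuclideanSpace ℝ (Fin n)) := by
      rw [← he (e.symm p), Homeomorph.apply_symm_apply]
    rw [this]
    exact hseg_cb hp
  -- ε-approximation
  have key : ∀ ε > (0:ℝ), dist x y ≤ 2 * N * (R + ε) := by
    intro ε hε
    obtain ⟨t, htcard, htcov⟩ := hreg a (R + ε) (by positivity)
    have hScov : S ⊆ ⋃ d ∈ t, Metric.ball d (R + ε) := by
      intro z hz
      exact htcov (by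
        have := hfS z hz
        rw [Set.mem_preimage, mem_ball]
        rw [mem_closedBall] at this
        linarith)
    have := connected_cover_dist (by positivity) t hSconn hScov hxS hyS
    have hcard : (t.card : ℝ) ≤ N := by exact_mod_cast htcard
    calc dist x y ≤ 2 * (R + ε) * t.card := this
      _ ≤ 2 * N * (R + ε) := by nlinarith
  have h2 : dist x y ≤ 2 * N * R := by
    refine le_of_forall_pos_le_add fun δ hδ => ?_
    have := key (δ / (2 * N + 1)) (by positivity)
    have hNd : 2 * (N:ℝ) * (δ / (2 * N + 1)) ≤ δ := by
      rw [div_eq_inv_mul, ← mul_assoc]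
      rw [mul_comm]
      rw [← mul_assoc]
      have h1 : ((2 * N + 1 : ℝ))⁻¹ * (2 * N) ≤ 1 := by
        rw [inv_mul_le_iff₀ (by positivity)]
        linarith
      nlinarith
    nlinarith
  have : 2 * (N:ℝ) * R ≤ 4 * N * R := by nlinarith
  linarith
end
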